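/- Let F_ℓ = P_{k_1} ∪ ⋯ ∪ P_{k_ℓ} be a linear forest with ℓ ≥ 1, k_1 ≥ ⋯ ≥ k_ℓ ≥ 2 and p = (∑_{i=1}^ℓ ⌊k_i/2⌋) − 1 ≥ 1. There exists N (depending on k_1,…,k_ℓ) such that the following holds for all n ≥ N: if G is a connected graph on n vertices containing no subgraph isomorphic to F_ℓ whose spectral radius λ = λ(G) is maximal among all connected F_ℓ-free graphs on n vertices, and if x = (x_u)_{u∈V(G)} is an entrywise positive eigenvector of the adjacency matrix of G corresponding to λ whose maximum entry equals 1, then x_u ≥ 1/λ for every vertex u of G. -/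

import Mathlib

open SimpleGraph

/-- `G` contains a subgraph isomorphic to `H`, i.e. there is an injective
graph homomorphism from `H` into `G`. -/
def ContainsCopy {α β : Type*} (G : SimpleGraph α) (H : SimpleGraph β) : Prop :=
  ∃ f : β → α, Function.Injective f ∧ ∀ ⦃a b⦄, H.Adj a b → G.Adj (f a) (f b)

/-- The linear forest `P_{k 0} ∪ ⋯ ∪ P_{k (ℓ-1)}`, a disjoint union of paths. -/
def linearForest {ℓ : ℕ} (k : Fin ℓ → ℕ) : SimpleGraph ((i : Fin ℓ) × Fin (k i)) where
  Adj a b := a.1 = b.1 ∧ (a.2.val + 1 = b.2.val ∨ b.2.val + 1 = a.2.val)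
  symm := ⟨fun a b h => ⟨h.1.symm, h.2.symm⟩⟩
  loopless := ⟨fun a h => by have := h.2; omega⟩

/-- The path on `k` vertices. -/
def pathG (k : ℕ) : SimpleGraph (Fin k) where
  Adj a b := a.val + 1 = b.val ∨ b.val + 1 = a.val
  symm := ⟨fun a b h => h.symm⟩
  loopless := ⟨fun a h => by omega⟩

/-- A graph on `Fin m ⊕ Fin n` respects the bipartition into the two `Fin` parts. -/
def IsBip {m n : ℕ} (G : SimpleGraph (Fin m ⊕ Fin n)) : Prop :=
  ∀ a b, G.Adj a b → a.isLeft ≠ b.isLeft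

/-- The bipartite graph on parts `Fin m` and `Fin n` whose edges are given by
the relation `r`. -/
def bipGraph (m n : ℕ) (r : Fin m → Fin n → Prop) : SimpleGraph (Fin m ⊕ Fin n) where
  Adj a b := (∃ i j, r i j ∧ a = Sum.inl i ∧ b = Sum.inr j) ∨
             (∃ i j, r i j ∧ a = Sum.inr j ∧ b = Sum.inl i)
  symm := ⟨fun a b h => by
    rcases h with ⟨i, j, hr, ha, hb⟩ | ⟨i, j, hr, ha, hb⟩
    · exact Or.inr ⟨i, j, hr, hb, ha⟩
    · exact Or.inl ⟨i, j, hr, hb, ha⟩⟩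
  loopless := ⟨fun a h => by
    rcases h with ⟨i, j, _, h1, h2⟩ | ⟨i, j, _, h1, h2⟩ <;> subst h1 <;> simp at h2⟩

/-- The bipartite Turán number `ex(m, n; H)`: the maximum number of edges of an
`H`-free bipartite graph with parts of sizes `m` and `n`. -/
noncomputable def bipEx (m n : ℕ) {β : Type*} (H : SimpleGraph β) : ℕ :=
  sSup {e | ∃ G : SimpleGraph (Fin m ⊕ Fin n),
    IsBip G ∧ ¬ ContainsCopy G H ∧ G.edgeSet.ncard = e}

-- The adjacency matrix of a graph on `Fin n`, over `ℝ`.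
open Classical in
noncomputable def adjMat {n : ℕ} (G : SimpleGraph (Fin n)) : Matrix (Fin n) (Fin n) ℝ :=
  fun i j => if G.Adj i j then 1 else 0

/-- The spectral radius (largest adjacency eigenvalue) of a graph on `Fin n`. -/
noncomputable def specRad {n : ℕ} (G : SimpleGraph (Fin n)) : ℝ :=
  sSup {μ : ℝ | Module.End.HasEigenvalue (Matrix.toLin' (adjMat G)) μ}

/-- The least adjacency eigenvalue of a graph on `Fin n`. -/
noncomputable def leastEig {n : ℕ} (G : SimpleGraph (Fin n)) : ℝ :=
  sInf {μ : ℝ | Module.End.HasEigenvalue (Matrix.toLin' (adjMat G)) μ}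


lemma adjMat_symm {n : ℕ} (G : SimpleGraph (Fin n)) : (adjMat G).IsHermitian := by
  ext i j
  simp only [Matrix.conjTranspose_apply, adjMat, starRingEnd_apply, star_trivial]
  by_cases h : G.Adj j i
  · simp [h, h.symm]
  · rw [if_neg h, if_neg (fun h' => h h'.symm)]

section spectral
variable {n : ℕ}

noncomputable abbrev TE (G : SimpleGraph (Fin n)) :
    EuclideanSpace ℝ (Fin n) →ₗ[ℝ] EuclideanSpace ℝ (Fin n) :=
  Matrix.toEuclideanLin (adjMat G)

lemma TE_apply (G : SimpleGraph (Fin n)) (v : EuclideanSpace ℝ (Fin n)) :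
    TE G v = (adjMat G).mulVec v := rfl

lemma TE_symmetric (G : SimpleGraph (Fin n)) : (TE G).IsSymmetric :=
  Matrix.isHermitian_iff_isSymmetric.mp (adjMat_symm G)

noncomputable def supRay (G : SimpleGraph (Fin n)) : ℝ :=
  ⨆ x : { x : EuclideanSpace ℝ (Fin n) // x ≠ 0 },
    RCLike.re (inner ℝ (TE G x) (x : EuclideanSpace ℝ (Fin n)) : ℝ) / ‖(x : EuclideanSpace ℝ (Fin n))‖ ^ 2

lemma bddAbove_ray (G : SimpleGraph (Fin n)) :
    BddAbove (Set.range fun x : { x : EuclideanSpace ℝ (Fin n) // x ≠ 0 } =>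
      RCLike.re (inner ℝ (TE G x) (x : EuclideanSpace ℝ (Fin n)) : ℝ) / ‖(x : EuclideanSpace ℝ (Fin n))‖ ^ 2) := by
  refine ⟨‖LinearMap.toContinuousLinearMap (TE G)‖, ?_⟩
  rintro r ⟨⟨x, hx⟩, rfl⟩
  simp only [RCLike.re_to_real]
  have hx0 : (0:ℝ) < ‖x‖ ^ 2 := pow_pos (norm_pos_iff.mpr hx) 2
  rw [div_le_iff₀ hx0]
  calc (inner ℝ (TE G x) x : ℝ) ≤ ‖TE G x‖ * ‖x‖ := real_inner_le_norm _ _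
    _ ≤ (‖LinearMap.toContinuousLinearMap (TE G)‖ * ‖x‖) * ‖x‖ := by
        gcongr
        exact (LinearMap.toContinuousLinearMap (TE G)).le_opNorm x
    _ = ‖LinearMap.toContinuousLinearMap (TE G)‖ * ‖x‖ ^ 2 := by ring

lemma hasEigen_supRay (hn : 0 < n) (G : SimpleGraph (Fin n)) :
    Module.End.HasEigenvalue (TE G) (supRay G) := by
  haveI : Nonempty (Fin n) := ⟨⟨0, hn⟩⟩
  haveI : Nontrivial (EuclideanSpace ℝ (Fin n)) := by
    refine ⟨0, EuclideanSpace.single ⟨0, hn⟩ 1, ?_⟩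
    intro h
    have := congrArg (fun v : EuclideanSpace ℝ (Fin n) => v ⟨0, hn⟩) h.symm
    simp [EuclideanSpace.single_apply] at this
  have := (TE_symmetric G).hasEigenvalue_iSup_of_finiteDimensional
  exact this

lemma hasEigen_iff (G : SimpleGraph (Fin n)) (μ : ℝ) :
    Module.End.HasEigenvalue (Matrix.toLin' (adjMat G)) μ ↔
      Module.End.HasEigenvalue (TE G) μ := by
  constructor
  · intro h
    obtain ⟨v, hv⟩ := h.exists_hasEigenvector
    have hv' : (adjMat G).mulVec v = μ • v := by
      rw [← Matrix.toLin'_apply (adjMat G) v]; exact hv.apply_eq_smul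
    refine Module.End.hasEigenvalue_of_hasEigenvector
      (x := (WithLp.toLp 2 v : EuclideanSpace ℝ (Fin n))) ⟨Module.End.mem_eigenspace_iff.mpr ?_, fun h => hv.right (by simpa using congrArg WithLp.ofLp h)⟩
    show TE G (WithLp.toLp 2 v) = μ • WithLp.toLp 2 v
    exact congrArg (WithLp.toLp 2) hv'
  · intro h
    obtain ⟨v, hv⟩ := h.exists_hasEigenvector
    have hv' : (adjMat G).mulVec v = μ • v := by
      rw [← TE_apply G v]; exact congrArg WithLp.ofLp hv.apply_eq_smul
    refine Module.End.hasEigenvalue_of_hasEigenvector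
      (x := (v : Fin n → ℝ)) ⟨Module.End.mem_eigenspace_iff.mpr ?_, fun h => hv.right (by simpa using congrArg (WithLp.toLp 2) h)⟩
    rw [Matrix.toLin'_apply]
    exact hv'

lemma eig_le_supRay (G : SimpleGraph (Fin n)) (μ : ℝ)
    (h : Module.End.HasEigenvalue (TE G) μ) : μ ≤ supRay G := by
  obtain ⟨v, hv⟩ := h.exists_hasEigenvector
  have happ : TE G v = μ • v := hv.apply_eq_smul
  have hn0 : (‖v‖:ℝ) ^ 2 ≠ 0 := by
    have := norm_pos_iff.mpr hv.right
    positivity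
  have hray : RCLike.re (inner ℝ (TE G v) v : ℝ) / ‖v‖ ^ 2 = μ := by
    rw [happ, real_inner_smul_left, real_inner_self_eq_norm_sq]
    simp only [RCLike.re_to_real]
    field_simp
    exact mul_div_cancel_right₀ μ (norm_ne_zero_iff.mpr hv.right)
  calc μ = _ := hray.symm
    _ ≤ supRay G := le_ciSup (bddAbove_ray G) ⟨v, hv.right⟩

lemma specRad_eq_supRay (hn : 0 < n) (G : SimpleGraph (Fin n)) : specRad G = supRay G := by
  have hmem : supRay G ∈ {μ : ℝ | Module.End.HasEigenvalue (Matrix.toLin' (adjMat G)) μ} := by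
    rw [Set.mem_setOf_eq, hasEigen_iff]
    exact hasEigen_supRay hn G
  have hub : ∀ μ ∈ {μ : ℝ | Module.End.HasEigenvalue (Matrix.toLin' (adjMat G)) μ},
      μ ≤ supRay G := by
    intro μ hμ
    exact eig_le_supRay G μ ((hasEigen_iff G μ).mp hμ)
  exact le_antisymm (csSup_le ⟨_, hmem⟩ hub) (le_csSup ⟨_, hub⟩ hmem)

noncomputable def quad (G : SimpleGraph (Fin n)) (v : Fin n → ℝ) : ℝ :=
  ∑ i, ∑ j, adjMat G i j * v i * v j

lemma quad_eq_inner (G : SimpleGraph (Fin n)) (v : Fin n → ℝ) :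
    (inner ℝ (TE G (WithLp.toLp 2 v)) (WithLp.toLp 2 v : EuclideanSpace ℝ (Fin n)) : ℝ) = quad G v := by
  simp only [quad, PiLp.inner_apply, RCLike.inner_apply', starRingEnd_apply, star_trivial]
  show ∑ i, (adjMat G).mulVec v i * v i = _
  simp only [Matrix.mulVec, dotProduct]
  rw [Finset.sum_comm]
  congr 1; ext j
  rw [Finset.sum_mul]
  congr 1; ext i
  have hsym : adjMat G j i = adjMat G i j := by
    have := congrFun (congrFun (adjMat_symm G) j) i
    simpa [Matrix.conjTranspose_apply] using this.symm
  rw [hsym]; try ring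

lemma norm_sq_eq (v : EuclideanSpace ℝ (Fin n)) : ‖v‖ ^ 2 = ∑ i, v i ^ 2 := by
  rw [← real_inner_self_eq_norm_sq]
  simp only [PiLp.inner_apply, RCLike.inner_apply, starRingEnd_apply, star_trivial]
  exact Finset.sum_congr rfl (fun i _ => (sq (v i)).symm)

lemma quad_le_specRad (hn : 0 < n) (G : SimpleGraph (Fin n)) (v : Fin n → ℝ)
    (hv : v ≠ 0) : quad G v ≤ specRad G * ∑ i, v i ^ 2 := by
  rw [specRad_eq_supRay hn G]
  have hvn : (0:ℝ) < ∑ i, v i ^ 2 := by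
    obtain ⟨i, hi⟩ := Function.ne_iff.mp hv
    refine Finset.sum_pos' (fun j _ => sq_nonneg (v j)) ⟨i, Finset.mem_univ i, ?_⟩
    exact lt_of_le_of_ne (sq_nonneg _) (Ne.symm (pow_ne_zero 2 hi))
  rw [mul_comm, ← div_le_iff₀' hvn]
  let v' : EuclideanSpace ℝ (Fin n) := WithLp.toLp 2 v
  have hv' : v' ≠ 0 := fun h => hv (by simpa [v'] using congrArg WithLp.ofLp h)
  have hnorm : ‖v'‖ ^ 2 = ∑ i, v i ^ 2 := norm_sq_eq v'
  have hq : quad G v = RCLike.re (inner ℝ (TE G v') v' : ℝ) := by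
    rw [show RCLike.re (inner ℝ (TE G v') v' : ℝ) = (inner ℝ (TE G v') v' : ℝ) from rfl]
    exact (quad_eq_inner G v).symm
  rw [hq, ← hnorm]
  exact le_ciSup (bddAbove_ray G) ⟨v', hv'⟩

end spectral

section star
variable {n : ℕ}

def starG (n : ℕ) (hn : 0 < n) : SimpleGraph (Fin n) where
  Adj a b := a ≠ b ∧ (a = ⟨0, hn⟩ ∨ b = ⟨0, hn⟩)
  symm := ⟨fun a b h => ⟨h.1.symm, h.2.symm⟩⟩
  loopless := ⟨fun a h => h.1 rfl⟩

lemma starG_adj (hn : 0 < n) (a b : Fin n) :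
    (starG n hn).Adj a b ↔ a ≠ b ∧ (a = ⟨0, hn⟩ ∨ b = ⟨0, hn⟩) := Iff.rfl

lemma starG_connected (hn : 0 < n) : (starG n hn).Connected := by
  rw [SimpleGraph.connected_iff]
  refine ⟨fun a b => ?_, ⟨⟨0, hn⟩⟩⟩
  by_cases hab : a = b
  · exact hab ▸ SimpleGraph.Reachable.refl a
  by_cases ha : a = ⟨0, hn⟩
  · exact (SimpleGraph.Adj.reachable ((starG_adj hn a b).mpr ⟨hab, Or.inl ha⟩))
  by_cases hb : b = ⟨0, hn⟩
  · exact (SimpleGraph.Adj.reachable ((starG_adj hn a b).mpr ⟨hab, Or.inr hb⟩))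
  · exact (SimpleGraph.Adj.reachable ((starG_adj hn a _).mpr ⟨ha, Or.inr rfl⟩)).trans
      (SimpleGraph.Adj.reachable ((starG_adj hn _ b).mpr ⟨fun h => hb h.symm, Or.inl rfl⟩))

lemma starG_quad (hn : 0 < n) (y : Fin n → ℝ) :
    quad (starG n hn) y = 2 * y ⟨0, hn⟩ * (∑ j, y j) - 2 * (y ⟨0, hn⟩)^2 := by
  classical
  have hrow : ∀ i : Fin n, ∑ j, adjMat (starG n hn) i j * y i * y j =
      if i = ⟨0, hn⟩ then y ⟨0, hn⟩ * (∑ j, y j) - y ⟨0, hn⟩ * y ⟨0, hn⟩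
      else y i * y ⟨0, hn⟩ := by
    intro i
    by_cases hi : i = ⟨0, hn⟩
    · rw [if_pos hi]
      have h1 : ∀ j : Fin n, adjMat (starG n hn) i j * y i * y j
          = y i * y j - (if j = i then y i * y j else 0) := by
        intro j
        by_cases hj : j = i
        · have : ¬ (starG n hn).Adj i j := by rw [hj]; exact (starG n hn).irrefl
          simp [adjMat, this, hj]
        · have : (starG n hn).Adj i j :=
            (starG_adj hn i j).mpr ⟨fun h => hj h.symm, Or.inl hi⟩
          simp [adjMat, this, hj]
      rw [Finset.sum_congr rfl (fun j _ => h1 j), Finset.sum_sub_distrib,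
        Finset.sum_ite_eq' Finset.univ i (fun j => y i * y j)]
      rw [hi]
      simp [Finset.mul_sum]
    · rw [if_neg hi]
      have h1 : ∀ j : Fin n, adjMat (starG n hn) i j * y i * y j
          = if j = ⟨0, hn⟩ then y i * y ⟨0, hn⟩ else 0 := by
        intro j
        by_cases hj : j = (⟨0, hn⟩ : Fin n)
        · rw [hj]
          have hadj : (starG n hn).Adj i ⟨0, hn⟩ :=
            (starG_adj hn i _).mpr ⟨fun h => hi h, Or.inr rfl⟩
          simp [adjMat, hadj]
        · have : ¬ (starG n hn).Adj i j := by
            rw [starG_adj hn i j]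
            rintro ⟨h1, (h2 | h2)⟩
            exacts [hi h2, hj h2]
          simp [adjMat, this, hj]
      rw [Finset.sum_congr rfl (fun j _ => h1 j),
        Finset.sum_ite_eq' Finset.univ (⟨0, hn⟩ : Fin n) (fun _ => y i * y ⟨0, hn⟩)]
      simp
  show ∑ i, ∑ j, adjMat (starG n hn) i j * y i * y j = _
  rw [Finset.sum_congr rfl (fun i _ => hrow i)]
  have h2 : ∀ i : Fin n, (if i = ⟨0, hn⟩ then y ⟨0, hn⟩ * (∑ j, y j) - y ⟨0, hn⟩ * y ⟨0, hn⟩ else y i * y ⟨0, hn⟩)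
      = y i * y ⟨0, hn⟩ + (if i = ⟨0, hn⟩ then y ⟨0, hn⟩ * (∑ j, y j) - 2 * (y ⟨0, hn⟩ * y ⟨0, hn⟩) else 0) := by
    intro i
    by_cases hi : i = ⟨0, hn⟩
    · rw [if_pos hi, if_pos hi, hi]; ring
    · rw [if_neg hi, if_neg hi]; ring
  rw [Finset.sum_congr rfl (fun i _ => h2 i), Finset.sum_add_distrib,
    Finset.sum_ite_eq' Finset.univ (⟨0, hn⟩ : Fin n)
      (fun _ => y ⟨0, hn⟩ * (∑ j, y j) - 2 * (y ⟨0, hn⟩ * y ⟨0, hn⟩))]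
  simp only [Finset.mem_univ, if_true, ← Finset.sum_mul]
  ring

end star

section star2
variable {n : ℕ}

lemma starG_y_pos (hn : 0 < n) (M : ℝ) (hM : 1 ≤ M) :
    (fun v : Fin n => if v = ⟨0, hn⟩ then M else 1) ≠ 0 := by
  intro h
  have := congrFun h ⟨0, hn⟩
  simp at this
  linarith

lemma starG_specRad (hn : 0 < n) (M : ℝ) (hM : 1 ≤ M) (hnM : M^2 + 1 ≤ (n:ℝ)) :
    M ≤ specRad (starG n hn) := by
  classical
  set y : Fin n → ℝ := fun v => if v = ⟨0, hn⟩ then M else 1 with hy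
  have hq := quad_le_specRad hn (starG n hn) y (starG_y_pos hn M hM)
  have hsum : ∑ j, y j = (n:ℝ) + (M - 1) := by
    have : ∀ j : Fin n, y j = 1 + (if j = ⟨0, hn⟩ then M - 1 else 0) := by
      intro j; by_cases hj : j = ⟨0, hn⟩ <;> simp [hy, hj]
    rw [Finset.sum_congr rfl (fun j _ => this j), Finset.sum_add_distrib,
      Finset.sum_ite_eq' Finset.univ (⟨0, hn⟩ : Fin n) (fun _ => M - 1)]
    simp
  have hsq : ∑ j, y j ^ 2 = (n:ℝ) + (M^2 - 1) := by
    have : ∀ j : Fin n, y j ^ 2 = 1 + (if j = ⟨0, hn⟩ then M^2 - 1 else 0) := by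
      intro j; by_cases hj : j = ⟨0, hn⟩ <;> simp [hy, hj]
    rw [Finset.sum_congr rfl (fun j _ => this j), Finset.sum_add_distrib,
      Finset.sum_ite_eq' Finset.univ (⟨0, hn⟩ : Fin n) (fun _ => M^2 - 1)]
    simp
  have hqv : quad (starG n hn) y = 2 * M * ((n:ℝ) - 1) := by
    rw [starG_quad hn y, hsum, hy]
    simp
    ring
  rw [hqv, hsq] at hq
  -- hq : 2*M*(n-1) ≤ specRad * (n + (M^2-1))
  have hpos : (0:ℝ) < (n:ℝ) + (M^2 - 1) := by nlinarith
  have h2 : M * ((n:ℝ) + (M^2 - 1)) ≤ 2 * M * ((n:ℝ) - 1) := by nlinarith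
  have := le_trans h2 hq
  exact le_of_mul_le_mul_right (by linarith [this]) hpos

end star2

section forest
variable {ℓ : ℕ} {k : Fin ℓ → ℕ}

lemma linearForest_adj (k : Fin ℓ → ℕ) (a b : (i : Fin ℓ) × Fin (k i)) :
    (linearForest k).Adj a b ↔
      a.1 = b.1 ∧ (a.2.val + 1 = b.2.val ∨ b.2.val + 1 = a.2.val) := Iff.rfl

lemma exists_disjoint_edges (hℓ : 1 ≤ ℓ) (hk : ∀ i, 2 ≤ k i)
    (hsum : 2 ≤ ∑ i, k i / 2) :
    ∃ a b c d : (i : Fin ℓ) × Fin (k i), (linearForest k).Adj a b ∧ (linearForest k).Adj c d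
      ∧ a ≠ c ∧ a ≠ d ∧ b ≠ c ∧ b ≠ d := by
  by_cases hl2 : 2 ≤ ℓ
  · set i0 : Fin ℓ := ⟨0, by omega⟩
    set i1 : Fin ℓ := ⟨1, by omega⟩
    have h0 := hk i0
    have h1 := hk i1
    refine ⟨⟨i0, ⟨0, by omega⟩⟩, ⟨i0, ⟨1, by omega⟩⟩, ⟨i1, ⟨0, by omega⟩⟩, ⟨i1, ⟨1, by omega⟩⟩,
      ⟨rfl, Or.inl rfl⟩, ⟨rfl, Or.inl rfl⟩, ?_, ?_, ?_, ?_⟩ <;>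
    · intro h
      have := congrArg (fun z => z.1.val) h
      simp [i0, i1] at this
  · have hl1 : ℓ = 1 := by omega
    subst hl1
    have hk4 : 4 ≤ k 0 := by
      have : ∑ i, k i / 2 = k 0 / 2 := by
        rw [Fin.sum_univ_one]
      omega
    refine ⟨⟨0, ⟨0, by omega⟩⟩, ⟨0, ⟨1, by omega⟩⟩, ⟨0, ⟨2, by omega⟩⟩, ⟨0, ⟨3, by omega⟩⟩,
      ⟨rfl, Or.inl rfl⟩, ⟨rfl, Or.inl rfl⟩, ?_, ?_, ?_, ?_⟩ <;>
    · intro h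
      have := congrArg (fun z => z.2.val) h
      simp at this

lemma starG_free (hn : 0 < n) (hℓ : 1 ≤ ℓ) (hk : ∀ i, 2 ≤ k i)
    (hsum : 2 ≤ ∑ i, k i / 2) :
    ¬ ContainsCopy (starG n hn) (linearForest k) := by
  rintro ⟨f, hinj, hhom⟩
  obtain ⟨a, b, c, d, hab, hcd, hac, had, hbc, hbd⟩ := exists_disjoint_edges hℓ hk hsum
  have h1 := (starG_adj hn _ _).mp (hhom hab)
  have h2 := (starG_adj hn _ _).mp (hhom hcd)
  rcases h1.2 with e1 | e1 <;> rcases h2.2 with e2 | e2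
  · exact hac (hinj (e1.trans e2.symm))
  · exact had (hinj (e1.trans e2.symm))
  · exact hbc (hinj (e1.trans e2.symm))
  · exact hbd (hinj (e1.trans e2.symm))

end forest

section main
variable {n : ℕ}

lemma sigma_eq_of {ℓ : ℕ} {k : Fin ℓ → ℕ} (a b : (i : Fin ℓ) × Fin (k i))
    (h1 : a.1 = b.1) (h2 : a.2.val = b.2.val) : a = b := by
  rcases a with ⟨i, s⟩
  rcases b with ⟨j, t⟩
  dsimp at h1
  subst h1
  dsimp at h2
  rw [Fin.ext h2]

lemma exists_nbr {ℓ : ℕ} {k : Fin ℓ → ℕ} (hk : ∀ i, 2 ≤ k i)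
    (a : (i : Fin ℓ) × Fin (k i)) : ∃ b, (linearForest k).Adj a b := by
  rcases a with ⟨i, t⟩
  by_cases h : t.val + 1 < k i
  · refine ⟨⟨i, ⟨t.val + 1, h⟩⟩, (linearForest_adj k _ _).mpr ⟨rfl, Or.inl ?_⟩⟩
    simp
  · have h2 := hk i
    have ht0 := t.isLt
    refine ⟨⟨i, ⟨t.val - 1, by omega⟩⟩, (linearForest_adj k _ _).mpr ⟨rfl, Or.inr ?_⟩⟩
    simp
    omega


def auxH (G : SimpleGraph (Fin n)) (S : Set (Fin n)) (w : Fin n) : SimpleGraph (Fin n) where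
  Adj a b := a ≠ b ∧ ((a ∈ S ∧ b ∈ S ∧ G.Adj a b) ∨ (a ∉ S ∧ b = w) ∨ (b ∉ S ∧ a = w))
  symm := ⟨by
    rintro a b ⟨hne, (⟨h1, h2, h3⟩ | ⟨h1, h2⟩ | ⟨h1, h2⟩)⟩
    · exact ⟨hne.symm, Or.inl ⟨h2, h1, h3.symm⟩⟩
    · exact ⟨hne.symm, Or.inr (Or.inr ⟨h1, h2⟩)⟩
    · exact ⟨hne.symm, Or.inr (Or.inl ⟨h1, h2⟩)⟩⟩
  loopless := ⟨fun a h => h.1 rfl⟩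

lemma auxH_adj (G : SimpleGraph (Fin n)) (S : Set (Fin n)) (w : Fin n) (a b : Fin n) :
    (auxH G S w).Adj a b ↔
      a ≠ b ∧ ((a ∈ S ∧ b ∈ S ∧ G.Adj a b) ∨ (a ∉ S ∧ b = w) ∨ (b ∉ S ∧ a = w)) :=
  Iff.rfl

theorem main_statement (ℓ : ℕ) (hℓ : 1 ≤ ℓ) (k : Fin ℓ → ℕ) (hk : ∀ i, 2 ≤ k i)
    (p : ℕ) (hp : p = (∑ i, k i / 2) - 1) (hp1 : 1 ≤ p) :
    ∃ N : ℕ, ∀ n : ℕ, N ≤ n →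
      ∀ G : SimpleGraph (Fin n), G.Connected → ¬ ContainsCopy G (linearForest k) →
        (∀ H : SimpleGraph (Fin n), H.Connected → ¬ ContainsCopy H (linearForest k) →
          specRad H ≤ specRad G) →
        ∀ x : Fin n → ℝ, (∀ u, 0 < x u) →
          Matrix.mulVec (adjMat G) x = specRad G • x →
          (∀ u, x u ≤ 1) → (∃ u, x u = 1) →
          ∀ u, 1 / specRad G ≤ x u := by
  classical
  set m : ℕ := Fintype.card ((i : Fin ℓ) × Fin (k i)) with hm
  set M : ℕ := m + 2 with hM
  refine ⟨M^2 + 1, ?_⟩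
  intro n hn G hGconn hGfree hmax x hxpos heig hxle hxex
  have hn0 : 0 < n := by nlinarith
  have hsum2 : 2 ≤ ∑ i, k i / 2 := by omega
  obtain ⟨w, hw⟩ := hxex
  set lam : ℝ := specRad G with hlam
  -- coordinates of eigen equation
  have heigc : ∀ i, ∑ j, adjMat G i j * x j = lam * x i := by
    intro i
    have := congrFun heig i
    simpa [Matrix.mulVec, dotProduct] using this
  -- lam ≥ M
  have hM1 : (1:ℝ) ≤ (M:ℝ) := by
    have : 1 ≤ M := by omega
    exact_mod_cast this
  have hlamM : (M:ℝ) ≤ lam := by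
    refine le_trans (starG_specRad hn0 (M:ℝ) hM1 ?_) (hmax (starG n hn0) (starG_connected hn0)
      (starG_free hn0 hℓ hk hsum2))
    have h' : ((M:ℝ))^2 + 1 ≤ (n:ℝ) := by exact_mod_cast hn
    linarith
  have hlam1 : (1:ℝ) ≤ lam := le_trans hM1 hlamM
  have hlampos : (0:ℝ) < lam := by linarith
  intro u
  by_contra hux
  push_neg at hux
  -- lam * x u < 1
  have hxu1 : lam * x u < 1 := by
    rw [lt_div_iff₀ hlampos] at hux
    linarith [hux]
  have hxuw : u ≠ w := by
    intro h
    rw [h, hw] at hxu1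
    simp at hxu1
    linarith
  have hnadj : ¬ G.Adj u w := by
    intro hadj
    have hterm : ∀ j, 0 ≤ adjMat G u j * x j := by
      intro j
      by_cases h : G.Adj u j
      · simp [adjMat, h]; exact le_of_lt (hxpos j)
      · simp [adjMat, h]
    have hone : adjMat G u w * x w = 1 := by simp [adjMat, hadj, hw]
    have h5 : adjMat G u w * x w ≤ ∑ j, adjMat G u j * x j :=
      Finset.single_le_sum (f := fun j => adjMat G u j * x j)
        (fun j _ => hterm j) (Finset.mem_univ w)
    rw [hone, heigc u] at h5
    linarith
  -- neighborhood of w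
  set B : Finset (Fin n) := Finset.univ.filter (fun v => G.Adj w v) with hB
  have hBcard : (M:ℝ) ≤ (B.card : ℝ) := by
    have h1 : ∑ j, adjMat G w j * x j = ∑ j ∈ B, x j := by
      rw [hB, Finset.sum_filter]
      refine Finset.sum_congr rfl (fun j _ => ?_)
      by_cases h : G.Adj w j <;> simp [adjMat, h]
    have h2 : ∑ j ∈ B, x j ≤ (B.card : ℝ) := by
      calc ∑ j ∈ B, x j ≤ ∑ j ∈ B, 1 := Finset.sum_le_sum (fun j _ => hxle j)
        _ = (B.card : ℝ) := by simp
    have h3 := heigc w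
    rw [hw, mul_one] at h3
    rw [h3] at h1
    linarith
  have hBcardN : m + 2 ≤ B.card := by exact_mod_cast hBcard
  -- the deleted graph and reachable set
  set G0 : SimpleGraph (Fin n) := G.deleteEdges {e | u ∈ e} with hG0
  have hG0adj : ∀ a b, G0.Adj a b ↔ G.Adj a b ∧ a ≠ u ∧ b ≠ u := by
    intro a b
    rw [hG0, SimpleGraph.deleteEdges_adj]
    simp [Sym2.mem_iff]
    tauto
  set S : Set (Fin n) := {v | G0.Reachable w v} with hS
  have hwS : w ∈ S := SimpleGraph.Reachable.refl w
  have huS : u ∉ S := by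
    intro h
    have h2 : G0.Reachable u w := (SimpleGraph.Reachable.symm h)
    obtain ⟨p⟩ := h2
    cases p with
    | nil => exact hxuw rfl
    | cons h' p' => exact (((hG0adj _ _).mp h').2.1) rfl
  have hSadj : ∀ a b, a ∈ S → G0.Adj a b → b ∈ S := by
    intro a b ha hab
    exact SimpleGraph.Reachable.trans ha hab.reachable
  have hSGadj : ∀ a b, a ∈ S → b ∈ S → (G.Adj a b ↔ G0.Adj a b) := by
    intro a b ha hb
    rw [hG0adj]
    constructor
    · intro h
      exact ⟨h, fun h' => huS (h' ▸ ha), fun h' => huS (h' ▸ hb)⟩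
    · tauto
  set H : SimpleGraph (Fin n) := auxH G S w with hH
  have hHreach : ∀ v, H.Reachable v w := by
    have key : ∀ (a b : Fin n) (q : G0.Walk a b), a ∈ S → H.Reachable a b := by
      intro a b q
      induction q with
      | nil => exact fun _ => SimpleGraph.Reachable.refl _
      | @cons a c b hadj q ih =>
        intro ha
        have hcS : c ∈ S := hSadj a c ha hadj
        have hH : H.Adj a c := by
          rw [hH, auxH_adj]
          exact ⟨hadj.ne, Or.inl ⟨ha, hcS, ((hG0adj a c).mp hadj).1⟩⟩
        exact (hH.reachable).trans (ih hcS)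
    intro v
    by_cases hv : v ∈ S
    · exact ((key w v (Classical.choice hv) hwS)).symm
    · refine SimpleGraph.Adj.reachable ?_
      rw [hH, auxH_adj]
      exact ⟨fun h => hv (h ▸ hwS), Or.inr (Or.inl ⟨hv, rfl⟩)⟩
  have hHconn : H.Connected := by
    rw [SimpleGraph.connected_iff]
    exact ⟨fun a b => (hHreach a).trans (hHreach b).symm, ⟨w⟩⟩
  have hHfree : ¬ ContainsCopy H (linearForest k) := by
    rintro ⟨f, finj, fhom⟩
    have hkey : ∀ {a b : (i : Fin ℓ) × Fin (k i)},
        (linearForest k).Adj a b → f a ∉ S → f b = w := by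
      intro a b hab hfa
      have h := fhom hab
      rw [hH, auxH_adj] at h
      rcases h.2 with ⟨h1, _, _⟩ | ⟨_, h2⟩ | ⟨_, h2⟩
      · exact absurd h1 hfa
      · exact h2
      · exact absurd (h2 ▸ hwS) hfa
    set bad : Finset ((i : Fin ℓ) × Fin (k i)) :=
      Finset.univ.filter (fun a => f a ∉ S) with hbaddef
    have hmembad : ∀ a, a ∈ bad ↔ f a ∉ S := by
      intro a; rw [hbaddef, Finset.mem_filter]; simp
    have hbadcard : bad.card ≤ 2 := by
      by_contra hc
      push_neg at hc
      obtain ⟨a1, a2, a3, h1, h2, h3, h12, h13, h23⟩ := Finset.two_lt_card_iff.mp hc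
      obtain ⟨b1, hb1⟩ := exists_nbr hk a1
      obtain ⟨b2, hb2⟩ := exists_nbr hk a2
      obtain ⟨b3, hb3⟩ := exists_nbr hk a3
      have e1 : f b1 = w := hkey hb1 ((hmembad a1).mp h1)
      have e2 : f b2 = w := hkey hb2 ((hmembad a2).mp h2)
      have e3 : f b3 = w := hkey hb3 ((hmembad a3).mp h3)
      have b12 : b1 = b2 := finj (e1.trans e2.symm)
      have b13 : b1 = b3 := finj (e1.trans e3.symm)
      subst b12; subst b13
      obtain ⟨f1, g1⟩ := (linearForest_adj k _ _).mp hb1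
      obtain ⟨f2, g2⟩ := (linearForest_adj k _ _).mp hb2
      obtain ⟨f3, g3⟩ := (linearForest_adj k _ _).mp hb3
      have v12 : a1.2.val ≠ a2.2.val := fun hv => h12 (sigma_eq_of a1 a2 (f1.trans f2.symm) hv)
      have v13 : a1.2.val ≠ a3.2.val := fun hv => h13 (sigma_eq_of a1 a3 (f1.trans f3.symm) hv)
      have v23 : a2.2.val ≠ a3.2.val := fun hv => h23 (sigma_eq_of a2 a3 (f2.trans f3.symm) hv)
      omega
    have himage : (Finset.univ.image f).card = m := by
      rw [Finset.card_image_of_injective _ finj, Finset.card_univ, hm]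
    have hdiff : 1 < (B \ Finset.univ.image f).card := by
      have h6 := Finset.card_le_card_sdiff_add_card (s := B) (t := Finset.univ.image f)
      omega
    obtain ⟨z1, hz1, z2, hz2, hz12⟩ := Finset.one_lt_card.mp hdiff
    rw [Finset.mem_sdiff] at hz1 hz2
    have hz1B : G.Adj w z1 := (Finset.mem_filter.mp hz1.1).2
    have hz2B : G.Adj w z2 := (Finset.mem_filter.mp hz2.1).2
    have hz1im : ∀ a, f a ≠ z1 := by
      intro a ha
      exact hz1.2 (Finset.mem_image.mpr ⟨a, Finset.mem_univ a, ha⟩)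
    have hz2im : ∀ a, f a ≠ z2 := by
      intro a ha
      exact hz2.2 (Finset.mem_image.mpr ⟨a, Finset.mem_univ a, ha⟩)
    -- generic builder
    have build : ∀ g : ((i : Fin ℓ) × Fin (k i)) → Fin n, Function.Injective g →
        (∀ a, f a ∈ S → g a = f a) → (∀ a, f a ∉ S → G.Adj w (g a)) → False := by
      intro g ginj ggood gbad
      refine hGfree ⟨g, ginj, ?_⟩
      intro c d hcd
      by_cases hc : f c ∈ S <;> by_cases hd : f d ∈ S
      · rw [ggood c hc, ggood d hd]
        have h := fhom hcd
        rw [hH, auxH_adj] at h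
        rcases h.2 with ⟨_, _, h3⟩ | ⟨h1, _⟩ | ⟨h1, _⟩
        · exact h3
        · exact absurd hc h1
        · exact absurd hd h1
      · have hfc : f c = w := hkey hcd.symm hd
        rw [ggood c hc, hfc]
        exact gbad d hd
      · have hfd : f d = w := hkey hcd hc
        rw [ggood d hd, hfd]
        exact (gbad c hc).symm
      · exact absurd (hkey hcd hc ▸ hwS) hd
    have hbc3 : bad.card = 0 ∨ bad.card = 1 ∨ bad.card = 2 := by omega
    rcases hbc3 with hbc | hbc | hbc
    · refine build f finj (fun a _ => rfl) (fun a ha => ?_)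
      exact absurd (Finset.card_eq_zero.mp hbc ▸ (hmembad a).mpr ha) (Finset.notMem_empty a)
    · obtain ⟨a0, ha0⟩ := Finset.card_eq_one.mp hbc
      have ha0S : f a0 ∉ S := (hmembad a0).mp (ha0 ▸ Finset.mem_singleton_self a0)
      have honly : ∀ a, f a ∉ S → a = a0 := by
        intro a ha
        have : a ∈ bad := (hmembad a).mpr ha
        rw [ha0, Finset.mem_singleton] at this
        exact this
      refine build (Function.update f a0 z1) ?_ ?_ ?_
      · intro c d hcd
        by_cases hcc : c = a0 <;> by_cases hdd : d = a0
        · rw [hcc, hdd]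
        · rw [hcc, Function.update_self, Function.update_of_ne hdd] at hcd
          exact absurd hcd.symm (hz1im d)
        · rw [hdd, Function.update_self, Function.update_of_ne hcc] at hcd
          exact absurd hcd (hz1im c)
        · rw [Function.update_of_ne hcc, Function.update_of_ne hdd] at hcd
          exact finj hcd
      · intro a ha
        have : a ≠ a0 := fun h => ha0S (h ▸ ha)
        rw [Function.update_of_ne this]
      · intro a ha
        rw [honly a ha, Function.update_self]
        exact hz1B
    · obtain ⟨a0, b0, hab0, hab⟩ := Finset.card_eq_two.mp hbc
      have ha0S : f a0 ∉ S := (hmembad a0).mp (by rw [hab]; simp)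
      have hb0S : f b0 ∉ S := (hmembad b0).mp (by rw [hab]; simp)
      have honly : ∀ a, f a ∉ S → a = a0 ∨ a = b0 := by
        intro a ha
        have : a ∈ bad := (hmembad a).mpr ha
        rw [hab, Finset.mem_insert, Finset.mem_singleton] at this
        exact this
      set g := Function.update (Function.update f a0 z1) b0 z2 with hg
      have hga0 : g a0 = z1 := by
        rw [hg, Function.update_of_ne hab0, Function.update_self]
      have hgb0 : g b0 = z2 := by rw [hg, Function.update_self]
      have hgoth : ∀ a, a ≠ a0 → a ≠ b0 → g a = f a := by
        intro a h1 h2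
        rw [hg, Function.update_of_ne h2, Function.update_of_ne h1]
      have hval : ∀ a, g a = f a ∨ (a = a0 ∧ g a = z1) ∨ (a = b0 ∧ g a = z2) := by
        intro a
        by_cases h1 : a = b0
        · exact Or.inr (Or.inr ⟨h1, h1 ▸ hgb0⟩)
        by_cases h2 : a = a0
        · exact Or.inr (Or.inl ⟨h2, h2 ▸ hga0⟩)
        · exact Or.inl (hgoth a h2 h1)
      refine build g ?_ ?_ ?_
      · intro c d hcd
        rcases hval c with hc | ⟨hc, hc'⟩ | ⟨hc, hc'⟩ <;>
          rcases hval d with hd | ⟨hd, hd'⟩ | ⟨hd, hd'⟩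
        · exact finj (by rw [← hc, ← hd]; exact hcd)
        · exact absurd (by rw [← hcd, hc] : f c = g d) (hd' ▸ hz1im c)
        · exact absurd (by rw [← hcd, hc] : f c = g d) (hd' ▸ hz2im c)
        · exact absurd ((hd.symm.trans hcd.symm).trans hc') (hz1im d)
        · exact hc.trans hd.symm
        · exact absurd (hc' ▸ hd' ▸ hcd : z1 = z2) hz12
        · exact absurd ((hd.symm.trans hcd.symm).trans hc') (hz2im d)
        · exact absurd (hd' ▸ hc' ▸ hcd.symm : z1 = z2) hz12
        · exact hc.trans hd.symm
      · intro a ha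
        have h1 : a ≠ a0 := fun h => ha0S (h ▸ ha)
        have h2 : a ≠ b0 := fun h => hb0S (h ▸ ha)
        exact hgoth a h1 h2
      · intro a ha
        rcases honly a ha with h | h
        · rw [h, hga0]; exact hz1B
        · rw [h, hgb0]; exact hz2B
  -- no G-edges between S and complement except through u
  have hTS : ∀ a b, a ∈ S → b ∉ S → b ≠ u → ¬ G.Adj a b := by
    intro a b ha hb hbu hadj
    have hau : a ≠ u := fun h => huS (h ▸ ha)
    exact hb (hSadj a b ha ((hG0adj a b).mpr ⟨hadj, hau, hbu⟩))
  have hAsym : ∀ a b, adjMat G a b = adjMat G b a := by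
    intro a b
    by_cases h : G.Adj a b
    · simp [adjMat, h, h.symm]
    · have h2 : ¬ G.Adj b a := fun h' => h h'.symm
      simp [adjMat, h, h2]
  set x' : Fin n → ℝ := fun v => if v ∈ S ∨ v = u then x v else 0 with hx'
  have hx'w : x' w = 1 := by
    show (if w ∈ S ∨ w = u then x w else 0) = 1
    rw [if_pos (Or.inl hwS)]; exact hw
  have hx'u : x' u = x u := by
    show (if u ∈ S ∨ u = u then x u else 0) = x u
    simp
  have hx'ne : x' ≠ 0 := by
    intro h
    have := congrFun h w
    rw [hx'w] at this
    simp at this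
  have hwu : w ≠ u := fun h => hxuw h.symm
  -- pointwise identity for quad H x'
  have P2 : ∀ i j, adjMat H i j * x' i * x' j =
      (if i ∈ S ∧ j ∈ S then adjMat G i j * x i * x j else 0)
      + ((if i = u then (if j = w then x u else 0) else 0)
        + (if j = u then (if i = w then x u else 0) else 0)) := by
    intro i j
    have hadjH : ∀ a b, adjMat H a b = if H.Adj a b then 1 else 0 := fun _ _ => rfl
    by_cases hiS : i ∈ S <;> by_cases hjS : j ∈ S
    · have hiu : i ≠ u := fun h => huS (h ▸ hiS)
      have hju : j ≠ u := fun h => huS (h ▸ hjS)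
      have hA : adjMat H i j = adjMat G i j := by
        rw [hadjH]
        have hiff : H.Adj i j ↔ G.Adj i j := by
          rw [hH, auxH_adj]
          constructor
          · rintro ⟨hne, (⟨_, _, h3⟩ | ⟨h1, _⟩ | ⟨h1, _⟩)⟩
            · exact h3
            · exact absurd hiS h1
            · exact absurd hjS h1
          · intro h
            exact ⟨h.ne, Or.inl ⟨hiS, hjS, h⟩⟩
        rw [if_congr hiff rfl rfl]
        rfl
      rw [hA, if_pos ⟨hiS, hjS⟩, if_neg hiu, if_neg hju]
      have h1 : x' i = x i := by
        show (if i ∈ S ∨ i = u then x i else 0) = x i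
        rw [if_pos (Or.inl hiS)]
      have h2 : x' j = x j := by
        show (if j ∈ S ∨ j = u then x j else 0) = x j
        rw [if_pos (Or.inl hjS)]
      rw [h1, h2]
      ring
    · -- i ∈ S, j ∉ S
      have hiu : i ≠ u := fun h => huS (h ▸ hiS)
      have hjw : j ≠ w := fun h => hjS (h ▸ hwS)
      rw [if_neg (fun h => hjS h.2), if_neg hiu]
      by_cases hju : j = u
      · have hx'j : x' j = x u := by
          show (if j ∈ S ∨ j = u then x j else 0) = x u
          rw [hju]; simp
        have hAiu : adjMat H i j = if i = w then 1 else 0 := by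
          rw [hadjH]
          have hiff : H.Adj i j ↔ i = w := by
            rw [hH, auxH_adj]
            constructor
            · rintro ⟨hne, (⟨_, h2, _⟩ | ⟨h1, _⟩ | ⟨_, h2⟩)⟩
              · exact absurd h2 hjS
              · exact absurd hiS h1
              · exact h2
            · intro h
              subst h
              exact ⟨fun he => hjS (he ▸ hwS), Or.inr (Or.inr ⟨hjS, rfl⟩)⟩
          rw [if_congr hiff rfl rfl]
        rw [hAiu, if_pos hju, hx'j]
        by_cases hiw : i = w
        · rw [if_pos hiw, if_pos hiw]
          have h1 : x' i = 1 := by rw [hiw]; exact hx'w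
          rw [h1]
          ring
        · rw [if_neg hiw, if_neg hiw]
          ring
      · have hx'j : x' j = 0 := by
          show (if j ∈ S ∨ j = u then x j else 0) = 0
          rw [if_neg]
          rintro (h | h)
          exacts [hjS h, hju h]
        rw [hx'j, if_neg hju]
        ring
    · -- i ∉ S, j ∈ S
      have hju : j ≠ u := fun h => huS (h ▸ hjS)
      have hiw : i ≠ w := fun h => hiS (h ▸ hwS)
      rw [if_neg (fun h => hiS h.1), if_neg hju]
      by_cases hiu : i = u
      · have hx'i : x' i = x u := by
          show (if i ∈ S ∨ i = u then x i else 0) = x u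
          rw [hiu]; simp
        have hAuj : adjMat H i j = if j = w then 1 else 0 := by
          rw [hadjH]
          have hiff : H.Adj i j ↔ j = w := by
            rw [hH, auxH_adj]
            constructor
            · rintro ⟨hne, (⟨h1, _, _⟩ | ⟨_, h2⟩ | ⟨h1, _⟩)⟩
              · exact absurd h1 hiS
              · exact h2
              · exact absurd hjS h1
            · intro h
              subst h
              exact ⟨fun he => hiS (he ▸ hwS), Or.inr (Or.inl ⟨hiS, rfl⟩)⟩
          rw [if_congr hiff rfl rfl]
        rw [hAuj, if_pos hiu, hx'i]
        by_cases hjw : j = w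
        · rw [if_pos hjw, if_pos hjw]
          have h1 : x' j = 1 := by rw [hjw]; exact hx'w
          rw [h1]
          ring
        · rw [if_neg hjw, if_neg hjw]
          ring
      · have hx'i : x' i = 0 := by
          show (if i ∈ S ∨ i = u then x i else 0) = 0
          rw [if_neg]
          rintro (h | h)
          exacts [hiS h, hiu h]
        rw [hx'i, if_neg hiu]
        ring
    · -- both ∉ S
      have hjw : j ≠ w := fun h => hjS (h ▸ hwS)
      have hiw : i ≠ w := fun h => hiS (h ▸ hwS)
      rw [if_neg (fun h => hiS h.1), if_neg hjw, if_neg hiw, ite_self, ite_self]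
      by_cases hiu : i = u <;> by_cases hju : j = u
      · have hij : i = j := hiu.trans hju.symm
        have hA0 : adjMat H i j = 0 := by
          rw [hadjH, if_neg (hij ▸ (H.irrefl : ¬ H.Adj i i))]
        rw [hA0]
        ring
      · have hx'j : x' j = 0 := by
          show (if j ∈ S ∨ j = u then x j else 0) = 0
          rw [if_neg]
          rintro (h | h)
          exacts [hjS h, hju h]
        rw [hx'j]
        ring
      · have hx'i : x' i = 0 := by
          show (if i ∈ S ∨ i = u then x i else 0) = 0
          rw [if_neg]
          rintro (h | h)
          exacts [hiS h, hiu h]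
        rw [hx'i]
        ring
      · have hx'i : x' i = 0 := by
          show (if i ∈ S ∨ i = u then x i else 0) = 0
          rw [if_neg]
          rintro (h | h)
          exacts [hiS h, hiu h]
        rw [hx'i]
        ring
  -- sum the pointwise identity
  have hquadH : quad H x' =
      (∑ i, ∑ j, (if i ∈ S ∧ j ∈ S then adjMat G i j * x i * x j else 0)) + 2 * x u := by
    show ∑ i, ∑ j, adjMat H i j * x' i * x' j = _
    rw [Finset.sum_congr rfl (fun i _ => Finset.sum_congr rfl (fun j _ => P2 i j))]
    have hsplit : ∀ i, ∑ j, ((if i ∈ S ∧ j ∈ S then adjMat G i j * x i * x j else 0)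
        + ((if i = u then (if j = w then x u else 0) else 0)
          + (if j = u then (if i = w then x u else 0) else 0)))
        = (∑ j, (if i ∈ S ∧ j ∈ S then adjMat G i j * x i * x j else 0))
          + ((if i = u then x u else 0) + (if i = w then x u else 0)) := by
      intro i
      rw [Finset.sum_add_distrib, Finset.sum_add_distrib]
      congr 1
      congr 1
      · by_cases hiu : i = u
        · rw [if_pos hiu]
          rw [Finset.sum_congr rfl (fun j _ => if_pos hiu),
            Finset.sum_ite_eq' Finset.univ w (fun _ => x u)]
          simp
        · rw [if_neg hiu, Finset.sum_congr rfl (fun j _ => if_neg hiu), Finset.sum_const_zero]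
      · rw [Finset.sum_ite_eq' Finset.univ u (fun _ => if i = w then x u else 0)]
        simp
    rw [Finset.sum_congr rfl (fun i _ => hsplit i), Finset.sum_add_distrib,
      Finset.sum_add_distrib, Finset.sum_ite_eq' Finset.univ u (fun _ => x u),
      Finset.sum_ite_eq' Finset.univ w (fun _ => x u)]
    simp
    ring
  -- row computation for the S-restricted quadratic form
  set ST : ℝ := ∑ i, (if i ∈ S then (0:ℝ) else x i ^ 2) with hSTdef
  set sig : ℝ := ∑ i, (if i ∈ S then adjMat G i u * x i else 0) with hsigdef
  have hrow : ∀ i, (∑ j, (if i ∈ S ∧ j ∈ S then adjMat G i j * x i * x j else 0))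
      = if i ∈ S then (x i * (lam * x i) - adjMat G i u * x i * x u) else 0 := by
    intro i
    by_cases hiS : i ∈ S
    · rw [if_pos hiS]
      have hterm : ∀ j, (if i ∈ S ∧ j ∈ S then adjMat G i j * x i * x j else 0)
          = adjMat G i j * x i * x j - (if j = u then adjMat G i u * x i * x u else 0) := by
        intro j
        by_cases hjS : j ∈ S
        · have hju : j ≠ u := fun h => huS (h ▸ hjS)
          rw [if_pos ⟨hiS, hjS⟩, if_neg hju]
          ring
        · rw [if_neg (fun h => hjS h.2)]
          by_cases hju : j = u
          · rw [if_pos hju, hju]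
            ring
          · rw [if_neg hju]
            have : ¬ G.Adj i j := hTS i j hiS hjS hju
            simp [adjMat, this]
      rw [Finset.sum_congr rfl (fun j _ => hterm j), Finset.sum_sub_distrib,
        Finset.sum_ite_eq' Finset.univ u (fun _ => adjMat G i u * x i * x u)]
      have h1 : ∑ j, adjMat G i j * x i * x j = x i * (lam * x i) := by
        rw [← heigc i, Finset.mul_sum]
        refine Finset.sum_congr rfl (fun j _ => ?_)
        ring
      rw [h1]
      simp
    · rw [if_neg hiS]
      rw [Finset.sum_congr rfl (fun j _ => if_neg (fun h => hiS h.1)), Finset.sum_const_zero]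
  have hQS : (∑ i, ∑ j, (if i ∈ S ∧ j ∈ S then adjMat G i j * x i * x j else 0))
      = lam * ((∑ i, x i ^ 2) - ST) - sig * x u := by
    rw [Finset.sum_congr rfl (fun i _ => hrow i)]
    have hterm : ∀ i, (if i ∈ S then (x i * (lam * x i) - adjMat G i u * x i * x u) else 0)
        = lam * (x i ^ 2 - (if i ∈ S then (0:ℝ) else x i ^ 2))
          - (if i ∈ S then adjMat G i u * x i else 0) * x u := by
      intro i
      by_cases hiS : i ∈ S
      · rw [if_pos hiS, if_pos hiS, if_pos hiS]
        ring
      · rw [if_neg hiS, if_neg hiS, if_neg hiS]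
        ring
    rw [Finset.sum_congr rfl (fun i _ => hterm i), Finset.sum_sub_distrib, ← Finset.mul_sum,
      Finset.sum_sub_distrib, ← Finset.sum_mul, hSTdef, hsigdef]
  have hsum' : (∑ i, x' i ^ 2) = (∑ i, x i ^ 2) - ST + x u ^ 2 := by
    have hterm : ∀ i, x' i ^ 2 = (x i ^ 2 - (if i ∈ S then (0:ℝ) else x i ^ 2))
        + (if i = u then x u ^ 2 else 0) := by
      intro i
      by_cases hiS : i ∈ S
      · have hiu : i ≠ u := fun h => huS (h ▸ hiS)
        have h1 : x' i = x i := by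
          show (if i ∈ S ∨ i = u then x i else 0) = x i
          rw [if_pos (Or.inl hiS)]
        rw [h1, if_pos hiS, if_neg hiu]
        ring
      · by_cases hiu : i = u
        · have h1 : x' i = x u := by
            show (if i ∈ S ∨ i = u then x i else 0) = x u
            rw [hiu]; simp
          rw [h1, if_neg hiS, if_pos hiu, hiu]
          ring
        · have h1 : x' i = 0 := by
            show (if i ∈ S ∨ i = u then x i else 0) = 0
            rw [if_neg]
            rintro (h | h)
            exacts [hiS h, hiu h]
          rw [h1, if_neg hiS, if_neg hiu]
          ring
    rw [Finset.sum_congr rfl (fun i _ => hterm i), Finset.sum_add_distrib,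
      Finset.sum_sub_distrib, Finset.sum_ite_eq' Finset.univ u (fun _ => x u ^ 2), hSTdef]
    simp
  have hsig_le : sig ≤ lam * x u := by
    have h1 : ∀ i, (if i ∈ S then adjMat G i u * x i else 0) ≤ adjMat G u i * x i := by
      intro i
      have hnn : 0 ≤ adjMat G u i * x i := by
        by_cases h : G.Adj u i
        · simp [adjMat, h]
          exact le_of_lt (hxpos i)
        · simp [adjMat, h]
      by_cases hiS : i ∈ S
      · rw [if_pos hiS, hAsym i u]
      · rw [if_neg hiS]
        exact hnn
    calc sig ≤ ∑ i, adjMat G u i * x i := Finset.sum_le_sum (fun i _ => h1 i)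
      _ = lam * x u := heigc u
  -- final contradiction
  have hHle : specRad H ≤ lam := hmax H hHconn hHfree
  have hq1 : quad H x' ≤ specRad H * ∑ i, x' i ^ 2 := quad_le_specRad hn0 H x' hx'ne
  have hnn : (0:ℝ) ≤ ∑ i, x' i ^ 2 := Finset.sum_nonneg (fun i _ => sq_nonneg (x' i))
  have hq2 : quad H x' ≤ lam * ∑ i, x' i ^ 2 :=
    le_trans hq1 (mul_le_mul_of_nonneg_right hHle hnn)
  rw [hquadH, hQS, hsum'] at hq2
  have hxupos := hxpos u
  nlinarith [mul_le_mul_of_nonneg_right hsig_le (le_of_lt hxupos),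
    mul_lt_mul_of_pos_right hxu1 hxupos]

end main

theorem statement_14 (ℓ : ℕ) (hℓ : 1 ≤ ℓ) (k : Fin ℓ → ℕ) (hk : ∀ i, 2 ≤ k i)
    (hmono : Antitone k)
    (p : ℕ) (hp : p = (∑ i, k i / 2) - 1) (hp1 : 1 ≤ p) :
    ∃ N : ℕ, ∀ n : ℕ, N ≤ n →
      ∀ G : SimpleGraph (Fin n), G.Connected → ¬ ContainsCopy G (linearForest k) →
        (∀ H : SimpleGraph (Fin n), H.Connected → ¬ ContainsCopy H (linearForest k) →
          specRad H ≤ specRad G) →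
        ∀ x : Fin n → ℝ, (∀ u, 0 < x u) →
          Matrix.mulVec (adjMat G) x = specRad G • x →
          (∀ u, x u ≤ 1) → (∃ u, x u = 1) →
          ∀ u, 1 / specRad G ≤ x u := by
  exact main_statement ℓ hℓ k hk p hp hp1
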